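/- Let P ⊆ ℝ^m_{≥0} be a nonempty Borel-fixed compact convex set with widths w_1(P) ≤ … ≤ w_m(P). Then (1/m!)·∏_{i=1}^m w_i(P) ≤ vol_{ℝ^m}(P) ≤ ∏_{i=1}^m w_i(P), where vol_{ℝ^m} denotes the m-dimensional Lebesgue measure. -/

import Mathlib

open MeasureTheory


/-- The elementary Borel move on `ℝ^m`: for `i < m` it sends `(a₁,…,a_m)` to
`(a₁,…,a_{i-1}, 0, a_i + a_{i+1}, a_{i+2},…,a_m)`, and for the last index it sends
`(a₁,…,a_m)` to `(a₁,…,a_{m-1}, 0)`. -/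
def borelMove (m : ℕ) (i : Fin m) (a : Fin m → ℝ) : Fin m → ℝ :=
  if h : (i : ℕ) + 1 < m then
    Function.update (Function.update a i 0) ⟨(i : ℕ) + 1, h⟩ (a i + a ⟨(i : ℕ) + 1, h⟩)
  else Function.update a i 0

/-- A set `P ⊆ ℝ^m_{≥0}` is Borel-fixed if it is stable under all elementary Borel moves:
`(a₁,…,a_m) ∈ P` implies `(a₁,…,a_{i-1},0,a_i+a_{i+1},a_{i+2},…,a_m) ∈ P` for `i ≤ m-1`,
and `(a₁,…,a_{m-1},0) ∈ P`. -/
def BorelFixedPt (m : ℕ) (P : Set (Fin m → ℝ)) : Prop :=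
  ∀ a ∈ P, ∀ i : Fin m, borelMove m i a ∈ P

lemma cutoff_mem {m : ℕ} {P : Set (Fin m → ℝ)} (hB : BorelFixedPt m P) :
    ∀ (n l : ℕ), m ≤ l + n → ∀ a ∈ P, (fun j : Fin m => if (j : ℕ) < l then a j else 0) ∈ P := by
  intro n
  induction n with
  | zero =>
    intro l hl a ha
    have h : (fun j : Fin m => if (j : ℕ) < l then a j else 0) = a := by
      funext j; rw [if_pos (by omega : (j : ℕ) < l)]
    rw [h]; exact ha
  | succ n ih =>
    intro l hl a ha
    by_cases h : m ≤ l + n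
    · exact ih l h a ha
    · have hlm : l < m := by omega
      have hb := hB a ha ⟨l, hlm⟩
      have hmem := ih (l + 1) (by omega) _ hb
      have heq : (fun j : Fin m => if (j : ℕ) < l + 1 then borelMove m ⟨l, hlm⟩ a j else 0)
          = (fun j : Fin m => if (j : ℕ) < l then a j else 0) := by
        funext j
        simp only [borelMove]
        split_ifs <;>
          first
            | rfl
            | omega
            | (simp only [Function.update_apply, Fin.ext_iff]
               split_ifs <;> first | rfl | omega)
      rw [heq] at hmem
      exact hmem

lemma push_mem {m : ℕ} {P : Set (Fin m → ℝ)} (hB : BorelFixedPt m P) :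
    ∀ (k : ℕ) (hk : k < m) (a : Fin m → ℝ), a ∈ P →
      (fun j : Fin m => if (j : ℕ) < k then 0 else if (j : ℕ) = k then
        (∑ j' : Fin m, if (j' : ℕ) ≤ k then a j' else 0) else a j) ∈ P := by
  intro k
  induction k with
  | zero =>
    intro hk a ha
    have h : (fun j : Fin m => if (j : ℕ) < 0 then 0 else if (j : ℕ) = 0 then
        (∑ j' : Fin m, if (j' : ℕ) ≤ 0 then a j' else 0) else a j) = a := by
      funext j
      simp only [Nat.not_lt_zero, if_false]
      by_cases hj : (j : ℕ) = 0
      · rw [if_pos hj]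
        have hc : ∀ j' : Fin m, ((j' : ℕ) ≤ 0) ↔ (j' = j) := by
          intro j'; rw [Fin.ext_iff]; omega
        simp only [hc]
        rw [Finset.sum_ite_eq' Finset.univ j a, if_pos (Finset.mem_univ j)]
      · rw [if_neg hj]
    rw [h]; exact ha
  | succ k ih =>
    intro hk a ha
    have hk' : k < m := by omega
    have hp := ih hk' a ha
    have hb := hB _ hp ⟨k, hk'⟩
    have heq : borelMove m ⟨k, hk'⟩ (fun j : Fin m => if (j : ℕ) < k then 0
          else if (j : ℕ) = k then (∑ j' : Fin m, if (j' : ℕ) ≤ k then a j' else 0) else a j)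
        = (fun j : Fin m => if (j : ℕ) < k + 1 then 0 else if (j : ℕ) = k + 1 then
            (∑ j' : Fin m, if (j' : ℕ) ≤ k + 1 then a j' else 0) else a j) := by
      have hsum : (∑ j' : Fin m, if (j' : ℕ) ≤ k + 1 then a j' else 0)
          = (∑ j' : Fin m, if (j' : ℕ) ≤ k then a j' else 0) + a ⟨k + 1, hk⟩ := by
        have hterm : ∀ j' : Fin m, (if (j' : ℕ) ≤ k + 1 then a j' else 0)
            = (if (j' : ℕ) ≤ k then a j' else 0) + (if j' = ⟨k + 1, hk⟩ then a j' else 0) := by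
          intro j'
          by_cases h1 : (j' : ℕ) ≤ k
          · rw [if_pos h1, if_pos (by omega), if_neg (by rw [Fin.ext_iff]; simp; omega)]
            ring
          · by_cases h2 : (j' : ℕ) = k + 1
            · rw [if_pos (by omega), if_neg h1, if_pos (by rw [Fin.ext_iff]; simpa)]
              ring
            · rw [if_neg (by omega), if_neg h1, if_neg (by rw [Fin.ext_iff]; simpa)]
              ring
        rw [Finset.sum_congr rfl fun j' _ => hterm j', Finset.sum_add_distrib,
          Finset.sum_ite_eq' Finset.univ (⟨k + 1, hk⟩ : Fin m) a,
          if_pos (Finset.mem_univ _)]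
      funext j
      rw [hsum]
      simp only [borelMove]
      split_ifs <;>
        first
          | rfl
          | omega
          | (simp only [Function.update_apply, Fin.ext_iff]
             split_ifs <;> first | rfl | omega | (exfalso; omega) | simp_all | skip)
    rw [heq] at hb
    exact hb


lemma vertex_mem {m : ℕ} {P : Set (Fin m → ℝ)} (hne : P.Nonempty)
    (hP : P ⊆ {x | ∀ k, 0 ≤ x k}) (hc : IsCompact P) (hconv : Convex ℝ P)
    (hB : BorelFixedPt m P) (w : Fin m → ℝ) (hw : ∀ i, IsLUB ((fun a => a i) '' P) (w i))
    (i : Fin m) : (fun j : Fin m => if j = i then w i else 0) ∈ P := by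
  obtain ⟨a, ha, hmax'⟩ := hc.exists_isMaxOn hne (continuous_apply i).continuousOn
  have hmax : ∀ y ∈ P, y i ≤ a i := fun y hy => hmax' hy
  have hwa : w i = a i := by
    refine le_antisymm ((hw i).2 ?_) ((hw i).1 ⟨a, ha, rfl⟩)
    rintro _ ⟨y, hy, rfl⟩
    exact hmax y hy
  set S : ℝ := ∑ j' : Fin m, if (j' : ℕ) ≤ (i : ℕ) then a j' else 0 with hSdef
  have hq := push_mem hB (i : ℕ) i.isLt a ha
  have hr := cutoff_mem hB m ((i : ℕ) + 1) (by omega) _ hq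
  have hreq : (fun j : Fin m => if (j : ℕ) < (i : ℕ) + 1 then
      (fun j : Fin m => if (j : ℕ) < (i : ℕ) then 0 else if (j : ℕ) = (i : ℕ) then S
        else a j) j else 0)
      = (fun j : Fin m => if j = i then S else 0) := by
    funext j
    simp only [Fin.ext_iff]
    split_ifs <;> first | rfl | omega
  rw [hreq] at hr
  have h0 := cutoff_mem hB m 0 (by omega) a ha
  have h0eq : (fun j : Fin m => if (j : ℕ) < 0 then a j else 0)
      = (fun _ : Fin m => (0 : ℝ)) := by
    funext j; simp
  rw [h0eq] at h0
  have haS : a i ≤ S := by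
    have := Finset.single_le_sum
      (f := fun j' : Fin m => if (j' : ℕ) ≤ (i : ℕ) then a j' else 0)
      (fun j _ => by
        by_cases h : (j : ℕ) ≤ (i : ℕ)
        · simpa [h] using hP ha j
        · simp [h]) (Finset.mem_univ i)
    simpa [hSdef] using this
  have hw0 : 0 ≤ w i := hwa ▸ hP ha i
  by_cases hS : S = 0
  · have hwi : w i = 0 := le_antisymm (hwa ▸ (hS ▸ haS)) hw0
    have : (fun j : Fin m => if j = i then w i else 0) = (fun _ : Fin m => (0 : ℝ)) := by
      funext j; split_ifs <;> simp [hwi]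
    rw [this]
    exact h0
  · have hSpos : 0 < S := lt_of_le_of_ne (le_trans (hP ha i) haS) (Ne.symm hS)
    have hθ0 : 0 ≤ w i / S := div_nonneg hw0 hSpos.le
    have hθ1 : 0 ≤ 1 - w i / S := by
      have : w i / S ≤ 1 := (div_le_one hSpos).2 (hwa ▸ haS)
      linarith
    have hmem := hconv hr h0 hθ0 hθ1 (by ring)
    have : (w i / S) • (fun j : Fin m => if j = i then S else 0)
        + (1 - w i / S) • (fun _ : Fin m => (0 : ℝ))
        = (fun j : Fin m => if j = i then w i else 0) := by
      funext j
      simp only [Pi.add_apply, Pi.smul_apply, smul_eq_mul]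
      split_ifs
      · rw [div_mul_cancel₀ _ hS]; ring
      · ring
    rwa [this] at hmem



lemma stdSimplex_measurable (n : ℕ) (t : ℝ) :
    MeasurableSet {y : Fin n → ℝ | (∀ i, 0 ≤ y i) ∧ ∑ i, y i ≤ t} := by
  have : {y : Fin n → ℝ | (∀ i, 0 ≤ y i) ∧ ∑ i, y i ≤ t}
      = (⋂ i, {y : Fin n → ℝ | 0 ≤ y i}) ∩ {y | ∑ i, y i ≤ t} := by
    ext y; simp [Set.mem_iInter]
  rw [this]
  exact (MeasurableSet.iInter fun i =>
      measurableSet_le measurable_const (measurable_pi_apply i)).inter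
    (measurableSet_le (Finset.measurable_sum _ fun i _ => measurable_pi_apply i) measurable_const)

lemma volume_stdSimplex : ∀ (n : ℕ) (t : ℝ), 0 ≤ t →
    volume {y : Fin n → ℝ | (∀ i, 0 ≤ y i) ∧ ∑ i, y i ≤ t}
      = ENNReal.ofReal (t ^ n / n.factorial) := by
  intro n
  induction n with
  | zero =>
    intro t ht
    have h : {y : Fin 0 → ℝ | (∀ i, 0 ≤ y i) ∧ ∑ i, y i ≤ t} = Set.univ := by
      ext y; simp [ht, Fin.elim0]
    rw [h]
    simp only [Nat.factorial_zero, pow_zero, Nat.cast_one, div_one, ENNReal.ofReal_one]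
    rw [MeasureTheory.volume_pi, Measure.pi_univ]
    simp
  | succ n ih =>
    intro t ht
    have key := (measurePreserving_piFinSuccAbove (fun _ : Fin (n+1) => (volume : Measure ℝ)) 0).symm
    rw [MeasureTheory.volume_pi,
      ← key.measure_preimage (stdSimplex_measurable (n+1) t).nullMeasurableSet]
    have hpre : (MeasurableEquiv.piFinSuccAbove (fun _ : Fin (n+1) => ℝ) 0).symm ⁻¹'
        {y : Fin (n+1) → ℝ | (∀ i, 0 ≤ y i) ∧ ∑ i, y i ≤ t}
        = {p : ℝ × (Fin n → ℝ) | 0 ≤ p.1 ∧ ((∀ i, 0 ≤ p.2 i) ∧ ∑ i, p.2 i ≤ t - p.1)} := by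
      ext ⟨s, y⟩
      simp only [Set.mem_preimage, Set.mem_setOf_eq,
        MeasurableEquiv.symm_mk, MeasurableEquiv.coe_mk, MeasurableEquiv.piFinSuccAbove_symm_apply,
        Equiv.symm_symm, Fin.insertNthEquiv_apply, Fin.insertNth_zero]
      rw [Fin.forall_fin_succ, Fin.sum_cons]
      simp only [Fin.cons_zero, Fin.cons_succ, cast_eq]
      constructor
      · rintro ⟨⟨h1, h2⟩, h3⟩; exact ⟨h1, h2, by linarith⟩
      · rintro ⟨h1, h2, h3⟩; exact ⟨⟨h1, h2⟩, by linarith⟩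
    rw [hpre]
    have hmeas : MeasurableSet {p : ℝ × (Fin n → ℝ) | 0 ≤ p.1 ∧
        ((∀ i, 0 ≤ p.2 i) ∧ ∑ i, p.2 i ≤ t - p.1)} := by
      have h2 : {p : ℝ × (Fin n → ℝ) | 0 ≤ p.1 ∧ ((∀ i, 0 ≤ p.2 i) ∧ ∑ i, p.2 i ≤ t - p.1)}
          = {p : ℝ × (Fin n → ℝ) | 0 ≤ p.1} ∩ ((⋂ i, {p : ℝ × (Fin n → ℝ) | 0 ≤ p.2 i}) ∩
            {p : ℝ × (Fin n → ℝ) | ∑ i, p.2 i ≤ t - p.1}) := by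
        ext p; simp only [Set.mem_inter_iff, Set.mem_iInter, Set.mem_setOf_eq, and_assoc]
      rw [h2]
      exact (measurableSet_le measurable_const measurable_fst).inter
        ((MeasurableSet.iInter fun i =>
            measurableSet_le measurable_const ((measurable_pi_apply i).comp measurable_snd)).inter
          (measurableSet_le (Finset.measurable_sum _ fun i _ => (measurable_pi_apply i).comp measurable_snd)
            (measurable_const.sub measurable_fst)))
    rw [Measure.prod_apply hmeas]
    have hslice : ∀ s : ℝ, (Measure.pi fun _ : Fin n => (volume : Measure ℝ))
        (Prod.mk s ⁻¹' {p : ℝ × (Fin n → ℝ) | 0 ≤ p.1 ∧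
          ((∀ i, 0 ≤ p.2 i) ∧ ∑ i, p.2 i ≤ t - p.1)})
        = Set.indicator (Set.Icc 0 t)
            (fun s => ENNReal.ofReal ((t - s) ^ n / n.factorial)) s := by
      intro s
      by_cases hs : s ∈ Set.Icc 0 t
      · have h3 : Prod.mk s ⁻¹' {p : ℝ × (Fin n → ℝ) | 0 ≤ p.1 ∧
            ((∀ i, 0 ≤ p.2 i) ∧ ∑ i, p.2 i ≤ t - p.1)}
            = {y : Fin n → ℝ | (∀ i, 0 ≤ y i) ∧ ∑ i, y i ≤ t - s} := by
          ext y; simp [hs.1]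
        rw [Set.indicator_of_mem hs, h3, ← MeasureTheory.volume_pi,
          ih (t - s) (by linarith [hs.2])]
      · have h3 : Prod.mk s ⁻¹' {p : ℝ × (Fin n → ℝ) | 0 ≤ p.1 ∧
            ((∀ i, 0 ≤ p.2 i) ∧ ∑ i, p.2 i ≤ t - p.1)} = ∅ := by
          ext y
          simp only [Set.mem_preimage, Set.mem_setOf_eq, Set.mem_empty_iff_false, iff_false,
            not_and]
          intro h1 h2
          simp only [Set.mem_Icc, not_and, not_le] at hs
          have h4 : (0:ℝ) ≤ ∑ i, y i := Finset.sum_nonneg fun i _ => h2 i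
          have := hs h1
          intro h5; linarith
        rw [Set.indicator_of_notMem hs, h3]
        exact measure_empty
    rw [lintegral_congr hslice, lintegral_indicator measurableSet_Icc,
      ← ofReal_integral_eq_lintegral_ofReal]
    · congr 1
      rw [MeasureTheory.integral_Icc_eq_integral_Ioc, ← intervalIntegral.integral_of_le ht]
      rw [intervalIntegral.integral_comp_sub_left (fun x : ℝ => x ^ n / (n.factorial : ℝ)) t]
      simp only [sub_self, sub_zero]
      rw [intervalIntegral.integral_div, integral_pow]
      rw [Nat.factorial_succ]
      push_cast
      have h1 : (0:ℝ) < (n.factorial : ℝ) := by positivity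
      field_simp
      simp
    · exact ((continuous_const.sub continuous_id).pow n).div_const _ |>.integrableOn_Icc
    · refine (ae_restrict_iff' measurableSet_Icc).2 (ae_of_all _ fun s hs => ?_)
      have : 0 ≤ t - s := by linarith [hs.2]
      positivity



/-- For a nonempty Borel-fixed compact convex set `P ⊆ ℝ^m_{≥0}` with widths
`w₁(P) ≤ … ≤ w_m(P)`, the Lebesgue volume of `P` satisfies
`(1/m!)·∏ᵢ wᵢ(P) ≤ vol(P) ≤ ∏ᵢ wᵢ(P)`. -/
theorem borelFixed_volume_bounds (m : ℕ) (P : Set (Fin m → ℝ)) (hne : P.Nonempty)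
    (hP : P ⊆ {x | ∀ k, 0 ≤ x k}) (hc : IsCompact P) (hconv : Convex ℝ P)
    (hB : BorelFixedPt m P)
    (w : Fin m → ℝ) (hw : ∀ i, IsLUB ((fun a => a i) '' P) (w i)) :
    ENNReal.ofReal ((∏ i : Fin m, w i) / (Nat.factorial m)) ≤ MeasureTheory.volume P ∧
    MeasureTheory.volume P ≤ ENNReal.ofReal (∏ i : Fin m, w i) := by
  have hub : ∀ (i : Fin m), ∀ x ∈ P, x i ≤ w i := fun i x hx => (hw i).1 ⟨x, hx, rfl⟩
  have hw0 : ∀ i, 0 ≤ w i := by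
    intro i
    obtain ⟨a, ha⟩ := hne
    exact le_trans (hP ha i) (hub i a ha)
  constructor
  · -- lower bound
    set f : (Fin m → ℝ) →ₗ[ℝ] (Fin m → ℝ) := Matrix.toLin' (Matrix.diagonal w) with hf
    have hdet : LinearMap.det f = ∏ i, w i := by
      rw [hf, LinearMap.det_toLin', Matrix.det_diagonal]
    have himg : f '' {y : Fin m → ℝ | (∀ i, 0 ≤ y i) ∧ ∑ i, y i ≤ 1} ⊆ P := by
      rintro _ ⟨x, hx, rfl⟩
      classical
      set cw : Option (Fin m) → ℝ := fun o => Option.elim o (1 - ∑ i, x i) (fun i => x i)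
        with hcw
      set zf : Option (Fin m) → (Fin m → ℝ) := fun o => Option.elim o (fun _ => 0)
        (fun i => fun j : Fin m => if j = i then w i else 0) with hzf
      have hz : ∀ o : Option (Fin m), zf o ∈ P := by
        rintro (_ | i)
        · obtain ⟨a, ha⟩ := hne
          have h0 := cutoff_mem hB m 0 (by omega) a ha
          have h0eq : (fun j : Fin m => if (j : ℕ) < 0 then a j else 0)
              = (fun _ : Fin m => (0 : ℝ)) := by funext j; simp
          rw [h0eq] at h0
          simpa [hzf] using h0
        · simpa [hzf] using vertex_mem hne hP hc hconv hB w hw i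
      have hmem := hconv.sum_mem (t := (Finset.univ : Finset (Option (Fin m))))
        (w := cw) (z := zf)
        (fun o _ => by
          rcases o with _ | i
          · simpa [hcw] using sub_nonneg.2 hx.2
          · simpa [hcw] using hx.1 i)
        (by rw [Fintype.sum_option]; simp [hcw])
        (fun o _ => hz o)
      have heq : (∑ o : Option (Fin m), cw o • zf o) = f x := by
        rw [Fintype.sum_option]
        funext j
        simp only [hcw, hzf, Option.elim, Pi.add_apply, Pi.smul_apply, smul_eq_mul,
          Finset.sum_apply, mul_zero, zero_add]
        have hsum : (∑ i, x i * (if j = i then w i else 0)) = w j * x j := by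
          rw [Finset.sum_eq_single j]
          · simp [mul_comm]
          · intro b _ hb; simp [Ne.symm hb]
          · intro h; exact absurd (Finset.mem_univ j) h
        rw [hsum, hf]
        rw [Matrix.toLin'_apply]
        rw [Matrix.mulVec_diagonal]
      exact heq ▸ hmem
    have hvol : MeasureTheory.volume (f '' {y : Fin m → ℝ | (∀ i, 0 ≤ y i) ∧ ∑ i, y i ≤ 1})
        = ENNReal.ofReal ((∏ i, w i) / m.factorial) := by
      rw [MeasureTheory.Measure.addHaar_image_linearMap, hdet,
        volume_stdSimplex m 1 zero_le_one]
      rw [abs_of_nonneg (Finset.prod_nonneg fun i _ => hw0 i), ← ENNReal.ofReal_mul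
        (Finset.prod_nonneg fun i _ => hw0 i)]
      congr 1
      rw [one_pow]
      ring
    calc ENNReal.ofReal ((∏ i : Fin m, w i) / (Nat.factorial m))
        = MeasureTheory.volume (f '' {y : Fin m → ℝ | (∀ i, 0 ≤ y i) ∧ ∑ i, y i ≤ 1}) :=
          hvol.symm
      _ ≤ MeasureTheory.volume P := measure_mono himg
  · -- upper bound
    have hsub : P ⊆ Set.pi Set.univ (fun i => Set.Icc 0 (w i)) :=
      fun x hx i _ => ⟨hP hx i, hub i x hx⟩
    calc MeasureTheory.volume P
        ≤ MeasureTheory.volume (Set.pi Set.univ (fun i => Set.Icc 0 (w i))) :=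
          measure_mono hsub
      _ = ∏ i, MeasureTheory.volume (Set.Icc 0 (w i)) := by
          rw [MeasureTheory.volume_pi, MeasureTheory.Measure.pi_pi]
      _ = ∏ i, ENNReal.ofReal (w i) := by
          simp [Real.volume_Icc]
      _ = ENNReal.ofReal (∏ i : Fin m, w i) := by
          rw [← ENNReal.ofReal_prod_of_nonneg (fun i _ => hw0 i)]
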